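/- For all nonnegative integers m and positive integers n with m < n, o(n) ≥ (o(m) + a(m) + o(n-m-1) + a(n-m-1))/2. -/
import Mathlib

/-- `PhiF T n = t(n) - 3n/8 - 21/32`, the fluctuation of `t`. -/
def PhiF (T : ℕ → ℚ) (n : ℕ) : ℚ := T n - 3*(n:ℚ)/8 - 21/32
/-- `PsiF S n = s(n) + 3/32 - 3n/8`, the fluctuation of `s`. -/
def PsiF (S : ℕ → ℚ) (n : ℕ) : ℚ := S n + 3/32 - 3*(n:ℚ)/8
/-- geometric part of Psi. -/
def XF (T S : ℕ → ℚ) (n : ℕ) : ℚ := PsiF S (n+2) + (PhiF T (n+2) - PhiF T (n+1))/4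

lemma phi_two (Φ : ℕ → ℚ) (h4 : ∀ n, Φ (n+4) = (Φ (n+3) + Φ (n+1))/2)
    (h0 : Φ 3 = -(Φ 2 + Φ 1)/2) :
    ∀ n, Φ (n+3) = -(Φ (n+2) + Φ (n+1))/2 := by
  intro n
  induction n with
  | zero => exact h0
  | succ k ih =>
    have h := h4 k
    simp only [show k+1+3 = k+4 from by omega, show k+1+2 = k+3 from by omega,
      show k+1+1 = k+2 from by omega]
    linarith

lemma superadd (T S : ℕ → ℚ)
    (hT1 : T 1 = 1) (hT2 : T 2 = 3/2) (hT3 : T 3 = 7/4)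
    (hS0 : S 0 = 0) (hS1 : S 1 = 0) (hS2 : S 2 = 1/2)
    (hTrec : ∀ n, T (n+4) = 3/4 + (T (n+3) + T (n+1))/2)
    (hSrec : ∀ n, S (n+2) = (S (n+1) + T (n+1))/2) :
    ∀ p q : ℕ, S p + S q ≤ S (p+q) := by
  have hP1 : PhiF T 1 = -(1/32) := by simp [PhiF, hT1]; norm_num
  have hP2 : PhiF T 2 = 3/32 := by simp [PhiF, hT2]; norm_num
  have hP3 : PhiF T 3 = -(1/32) := by simp [PhiF, hT3]; norm_num
  have hΦ4 : ∀ n, PhiF T (n+4) = (PhiF T (n+3) + PhiF T (n+1))/2 := by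
    intro n; simp only [PhiF, hTrec n]; push_cast; ring
  have hΦ2 := phi_two (PhiF T) hΦ4 (by rw [hP1, hP2, hP3]; norm_num)
  have hΨrec : ∀ n, PsiF S (n+2) = (PsiF S (n+1) + PhiF T (n+1))/2 := by
    intro n; simp only [PsiF, PhiF, hSrec n]; push_cast; ring
  have hXrec : ∀ n, XF T S (n+1) = XF T S n / 2 := by
    intro n
    simp only [XF, show n+1+2 = n+3 from by omega, show n+1+1 = n+2 from by omega]
    have e1 := hΨrec (n+1)
    have e2 := hΦ2 n
    simp only [show n+1+2 = n+3 from by omega, show n+1+1 = n+2 from by omega] at e1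
    rw [e1, e2]; ring
  have hX0 : XF T S 0 = -(1/8) := by
    simp only [XF, show (0:ℕ)+2 = 2 from rfl, show (0:ℕ)+1 = 1 from rfl, hP1, hP2, PsiF, hS2]
    norm_num
  have hX : ∀ n, XF T S n = -((1/2:ℚ)^(n+3)) := by
    intro n
    induction n with
    | zero => rw [hX0]; norm_num
    | succ k ih =>
      rw [hXrec k, ih, show k+1+3 = k+3+1 from by omega, pow_succ]; ring
  have hQ : ∀ n, (PhiF T (n+1))^2 + PhiF T (n+1) * PhiF T (n+2) + 2*(PhiF T (n+2))^2
      ≤ (1/2:ℚ)^(n+6) := by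
    intro n
    induction n with
    | zero => rw [hP1, hP2]; norm_num
    | succ k ih =>
      have e2 := hΦ2 k
      simp only [show k+1+1 = k+2 from by omega, show k+1+2 = k+3 from by omega,
        show k+1+6 = k+6+1 from by omega]
      rw [e2]
      have key : (PhiF T (k+2))^2 + PhiF T (k+2) * (-(PhiF T (k+2) + PhiF T (k+1))/2)
          + 2*((-(PhiF T (k+2) + PhiF T (k+1))/2))^2
          = ((PhiF T (k+1))^2 + PhiF T (k+1) * PhiF T (k+2) + 2*(PhiF T (k+2))^2)/2 := by
        ring
      have hp : ((1/2:ℚ))^(k+6+1) = (1/2:ℚ)^(k+6) * (1/2) := pow_succ _ _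
      rw [key, hp]; linarith
  have hDb : ∀ n, -(1/8:ℚ) ≤ PhiF T (n+2) - PhiF T (n+1) ∧
      PhiF T (n+2) - PhiF T (n+1) ≤ 1/8 := by
    intro n
    match n with
    | 0 => rw [hP1, hP2]; norm_num
    | 1 => rw [hP2, hP3]; norm_num
    | (m+2) =>
      have hq := hQ (m+2)
      have hle : ((1/2:ℚ))^(m+2+6) ≤ 1/256 := by
        calc ((1/2:ℚ))^(m+2+6) ≤ (1/2:ℚ)^8 :=
              pow_le_pow_of_le_one (by norm_num) (by norm_num) (by omega)
          _ = 1/256 := by norm_num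
      have hsq : (PhiF T (m+2+2) - PhiF T (m+2+1))^2 ≤ 1/64 := by
        nlinarith [sq_nonneg (3*PhiF T (m+2+1) + 5*PhiF T (m+2+2))]
      constructor <;> nlinarith [hsq]
  have hΨrep : ∀ n, PsiF S (n+2) = XF T S n - (PhiF T (n+2) - PhiF T (n+1))/4 := by
    intro n; simp only [XF]; ring
  have hSpsi : ∀ n : ℕ, S n = PsiF S n - 3/32 + 3*(n:ℚ)/8 := by
    intro n; simp [PsiF]; ring
  -- monotonicity
  have mono : ∀ n, S n ≤ S (n+1) := by
    intro n
    match n with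
    | 0 => rw [hS0, hS1]
    | 1 => rw [hS1, hS2]; norm_num
    | (m+2) =>
      have ra := hΨrep m
      have rb := hΨrep (m+1)
      have xa := hX m
      have xb := hX (m+1)
      have da := hDb m
      have db := hDb (m+1)
      have ea := hSpsi (m+2)
      have eb := hSpsi (m+2+1)
      simp only [show m+1+2 = m+2+1 from by omega, show m+1+1 = m+2 from by omega] at rb xb db
      have hpow : ((1/2:ℚ))^(m+1+3) = (1/2:ℚ)^(m+3)/2 := by
        rw [show m+1+3 = m+3+1 from by omega, pow_succ]; ring
      have hpos : (0:ℚ) < (1/2:ℚ)^(m+3) := by positivity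
      rw [ea, eb]; push_cast
      rw [rb, ra] at *
      rw [xa, xb] at *
      rw [hpow]
      obtain ⟨da1, da2⟩ := da
      obtain ⟨db1, db2⟩ := db
      linarith
  ---- main
  intro p q
  match p, q with
  | 0, q => rw [hS0, Nat.zero_add, zero_add]
  | (p+1), 0 => rw [hS0, Nat.add_zero, add_zero]
  | 1, 1 => rw [hS1, hS2]; norm_num
  | 1, (q+2) =>
    rw [hS1, zero_add, show 1+(q+2) = (q+2)+1 from by omega]
    exact mono (q+2)
  | (p+2), 1 =>
    rw [hS1, add_zero]
    exact mono (p+2)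
  | (p+2), (q+2) =>
    have rp := hΨrep p
    have rq := hΨrep q
    have rn := hΨrep (p+q+2)
    have xp := hX p
    have xq := hX q
    have xn := hX (p+q+2)
    have dp := hDb p
    have dq := hDb q
    have dn := hDb (p+q+2)
    have h1 : ((1/2:ℚ))^(p+q+2+3) ≤ (1/2:ℚ)^(p+3) :=
      pow_le_pow_of_le_one (by norm_num) (by norm_num) (by omega)
    have h2 : (0:ℚ) < (1/2:ℚ)^(q+3) := by positivity
    rw [show p+2+(q+2) = (p+q+2)+2 from by omega]
    rw [hSpsi (p+2), hSpsi (q+2), hSpsi (p+q+2+2)]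
    push_cast
    rw [rp, rq, rn, xp, xq, xn]
    obtain ⟨dp1, dp2⟩ := dp
    obtain ⟨dq1, dq2⟩ := dq
    obtain ⟨dn1, dn2⟩ := dn
    linarith

theorem stmt_12
    (i a : ℕ → ℚ)
    (ha0 : a 0 = 0) (hi1 : i 1 = 1) (ha1 : a 1 = 0)
    (ha : ∀ n : ℕ, 2 ≤ n → a n = (i (n - 1) + a (n - 1)) / 2)
    (hi23 : ∀ n : ℕ, 2 ≤ n → n ≤ 3 → i n = i (n - 1))
    (hi4 : i 4 = (i 1 + a 1 + i 2 + a 2) / 2)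
    (hi5 : ∀ n : ℕ, 5 ≤ n → i n = (i 2 + a 2 + i (n - 3) + a (n - 3)) / 2)
    (o : ℕ → ℚ)
    (ho0 : o 0 = 0) (ho1 : o 1 = 0)
    (ho : ∀ n : ℕ, 2 ≤ n → o n = (o (n - 1) + a (n - 1)) / 2) :
    ∀ m n : ℕ, 1 ≤ n → m < n →
      o n ≥ (o m + a m + o (n - m - 1) + a (n - m - 1)) / 2 := by
  have hi2 : i 2 = 1 := by
    have h := hi23 2 (by norm_num) (by norm_num)
    norm_num at h
    rw [h, hi1]
  have ha2 : a 2 = 1/2 := by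
    have h := ha 2 (by norm_num)
    norm_num at h
    rw [h, hi1, ha1]; norm_num
  have hi3 : i 3 = 1 := by
    have h := hi23 3 (by norm_num) (by norm_num)
    norm_num at h
    rw [h, hi2]
  have ha3 : a 3 = 3/4 := by
    have h := ha 3 (by norm_num)
    norm_num at h
    rw [h, hi2, ha2]; norm_num
  have ho2 : o 2 = 0 := by
    have h := ho 2 (by norm_num)
    norm_num at h
    rw [h, ho1, ha1]; norm_num
  set T : ℕ → ℚ := fun n => i n + a n with hT
  set S : ℕ → ℚ := fun n => o n + a n with hS
  have hTrec : ∀ n, T (n+4) = 3/4 + (T (n+3) + T (n+1))/2 := by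
    intro n
    have haa : a (n+4) = (i (n+3) + a (n+3))/2 := by
      have h := ha (n+4) (by omega)
      simpa [show n+4-1 = n+3 from by omega] using h
    match n with
    | 0 =>
      norm_num at haa
      simp only [hT, Nat.zero_add]
      rw [haa, hi4, hi1, ha1, hi2, ha2]
      ring
    | (m+1) =>
      have hii : i (m+5) = (i 2 + a 2 + i (m+2) + a (m+2))/2 := by
        have h := hi5 (m+5) (by omega)
        simpa [show m+5-3 = m+2 from by omega] using h
      simp only [hT, show m+1+4 = m+5 from by omega, show m+1+3 = m+4 from by omega,
        show m+1+1 = m+2 from by omega]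
      rw [show m+5 = m+1+4 from by omega] at haa ⊢
      rw [haa, show m+1+4 = m+5 from by omega, hii, hi2, ha2,
        show m+1+3 = m+4 from by omega]
      ring
  have hSrec : ∀ n, S (n+2) = (S (n+1) + T (n+1))/2 := by
    intro n
    have h1 := ho (n+2) (by omega)
    have h2 := ha (n+2) (by omega)
    simp only [show n+2-1 = n+1 from by omega] at h1 h2
    simp only [hS, hT]
    rw [h1, h2]; ring
  have key := superadd T S
    (by simp only [hT]; rw [hi1, ha1]; norm_num)
    (by simp only [hT]; rw [hi2, ha2]; norm_num)
    (by simp only [hT]; rw [hi3, ha3]; norm_num)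
    (by simp only [hS]; rw [ho0, ha0]; norm_num)
    (by simp only [hS]; rw [ho1, ha1]; norm_num)
    (by simp only [hS]; rw [ho2, ha2]; norm_num)
    hTrec hSrec
  intro m n hn hmn
  obtain ⟨q, rfl⟩ : ∃ q, n = m + q + 1 := ⟨n - m - 1, by omega⟩
  have hidx : m + q + 1 - m - 1 = q := by omega
  rw [hidx]
  rcases Nat.eq_zero_or_pos (m + q) with h0 | hpos
  · obtain ⟨rfl, rfl⟩ : m = 0 ∧ q = 0 := by omega
    rw [ho1, ho0, ha0]
    norm_num
  · have hon := ho (m+q+1) (by omega)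
    simp only [show m+q+1-1 = m+q from by omega] at hon
    have hk := key m q
    simp only [hS] at hk
    rw [ge_iff_le, hon]
    linarith
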